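/- Let d = 2, p = ∞, and let r be a real-valued coherent risk measure on L^∞(Ω; ℝ) that is comonotonically additive (r(ξ + η) = r(ξ) + r(η) whenever ξ, η are comonotonic), with 𝐫 = (r, r). Let π^{12}, π^{21} > 0 with π^{12}π^{21} > 1, set b₁ = (1, −π^{21}), b₂ = (−π^{12}, 1), K = {λb₁ + δb₂ : λ, δ ≥ 0}, and let K' = {u ∈ ℝ² : ⟨u, x⟩ ≤ 0 for all x ∈ K} be the dual cone. Let X ∈ L^∞(Ω; ℝ²) and set L = ⋂_{u∈K'} {x ∈ ℝ² : r(⟨X, u⟩) ≤ ⟨x, u⟩}. Then there exists b > 0 such that every x ∈ L with ‖x‖ ≥ b satisfies x ∈ ρ_s(X + K). -/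

import Mathlib

open MeasureTheory Set Filter
open scoped Pointwise ENNReal RealInnerProductSpace

noncomputable section

/-- `ℝ^d` with the Euclidean norm. -/
abbrev Vec (d : ℕ) := EuclideanSpace ℝ (Fin d)

/-- Effros measurability of a set-valued map: `{ω : X(ω) ∩ G ≠ ∅}` is measurable
for every open `G`. -/
def EffrosMeasurable {Ω : Type*} [MeasurableSpace Ω] {d : ℕ} (X : Ω → Set (Vec d)) : Prop :=
  ∀ G : Set (Vec d), IsOpen G → MeasurableSet {ω | (X ω ∩ G).Nonempty}

/-- A set-valued portfolio: an Effros-measurable map with nonempty closed convex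
lower-set values. -/
structure IsPortfolio {Ω : Type*} [MeasurableSpace Ω] {d : ℕ} (X : Ω → Set (Vec d)) : Prop where
  effros : EffrosMeasurable X
  nonempty : ∀ ω, (X ω).Nonempty
  isClosed : ∀ ω, IsClosed (X ω)
  convex : ∀ ω, Convex ℝ (X ω)
  lower : ∀ ω, ∀ x ∈ X ω, ∀ y : Vec d, (∀ i, y i ≤ x i) → y ∈ X ω

/-- A real-valued coherent risk measure on `L^p(Ω; ℝ)`: monotone (antitone in the gain),
cash invariant, subadditive and positively homogeneous. -/
structure IsCoherentR {Ω : Type*} [MeasurableSpace Ω] (μ : Measure Ω) (p : ℝ≥0∞)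
    (r : (Ω → ℝ) → ℝ) : Prop where
  mono : ∀ ξ η : Ω → ℝ, MemLp ξ p μ → MemLp η p μ → (∀ᵐ ω ∂μ, ξ ω ≤ η ω) → r η ≤ r ξ
  cash : ∀ ξ : Ω → ℝ, MemLp ξ p μ → ∀ c : ℝ, r (fun ω => ξ ω + c) = r ξ - c
  subadd : ∀ ξ η : Ω → ℝ, MemLp ξ p μ → MemLp η p μ →
    r (fun ω => ξ ω + η ω) ≤ r ξ + r η
  homog : ∀ ξ : Ω → ℝ, MemLp ξ p μ → ∀ c : ℝ, 0 < c →
    r (fun ω => c * ξ ω) = c * r ξ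

/-- The selection risk measure `ρ_{s,0}(𝐗)` (real-valued marginal risk measures). -/
def rho0R {Ω : Type*} [MeasurableSpace Ω] (μ : Measure Ω) (p : ℝ≥0∞) {d : ℕ}
    (r : Fin d → (Ω → ℝ) → ℝ) (X : Ω → Set (Vec d)) : Set (Vec d) :=
  {x | ∃ ξ : Ω → Vec d, MemLp ξ p μ ∧ (∀ᵐ ω ∂μ, ξ ω ∈ X ω) ∧
        ∀ i, r i (fun ω => ξ ω i + x i) ≤ 0}

/-- Two random variables are comonotonic if
`(ξ(ω) − ξ(ω'))(η(ω) − η(ω')) ≥ 0` for `P ⊗ P`-a.e. `(ω, ω')`. -/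
def Comonotonic {Ω : Type*} [MeasurableSpace Ω] (μ : Measure Ω) (ξ η : Ω → ℝ) : Prop :=
  ∀ᵐ w ∂(μ.prod μ), 0 ≤ (ξ w.1 - ξ w.2) * (η w.1 - η w.2)

set_option maxHeartbeats 2000000 in
/-- Proposition 5.4: in dimension 2 with `p = ∞`, a comonotonically additive coherent
risk measure `r`, and the cone `K` generated by a bid-ask matrix, every point of the
lower bound `⋂_{u ∈ K'}{x : r(⟨X,u⟩) ≤ ⟨x,u⟩}` with sufficiently large norm belongs to
`ρ_s(X + K)`. -/
theorem statement13 {Ω : Type*} [MeasurableSpace Ω] (μ : Measure Ω) [IsProbabilityMeasure μ]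
    [μ.IsComplete]
    (r : (Ω → ℝ) → ℝ) (hr : IsCoherentR μ ⊤ r)
    (hcom : ∀ ξ η : Ω → ℝ, MemLp ξ ⊤ μ → MemLp η ⊤ μ → Comonotonic μ ξ η →
      r (fun ω => ξ ω + η ω) = r ξ + r η)
    (π12 π21 : ℝ) (h12 : 0 < π12) (h21 : 0 < π21) (hπ : 1 < π12 * π21)
    (b₁ b₂ : Vec 2) (hb₁ : b₁ 0 = 1 ∧ b₁ 1 = -π21) (hb₂ : b₂ 0 = -π12 ∧ b₂ 1 = 1)
    (K : Set (Vec 2)) (hK : K = {y | ∃ l δ : ℝ, 0 ≤ l ∧ 0 ≤ δ ∧ y = l • b₁ + δ • b₂})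
    (X : Ω → Vec 2) (hX : MemLp X ⊤ μ) :
    ∃ b > (0 : ℝ),
      ∀ x ∈ ⋂ u ∈ {u : Vec 2 | ∀ y ∈ K, ⟪u, y⟫ ≤ 0},
          {x : Vec 2 | r (fun ω => ⟪X ω, u⟫) ≤ ⟪x, u⟫},
        b ≤ ‖x‖ →
          x ∈ closure {x : Vec 2 | ∃ η : Ω → Vec 2, MemLp η ⊤ μ ∧ (∀ᵐ ω ∂μ, η ω ∈ K) ∧
            ∀ i, r (fun ω => X ω i + η ω i + x i) ≤ 0} := by

  classical
  -- coordinate functions are in L^infinity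
  have hX0 : MemLp (fun ω => X ω 0) ⊤ μ := by
    have := (EuclideanSpace.proj (0 : Fin 2) : Vec 2 →L[ℝ] ℝ).comp_memLp' hX
    exact this
  have hX1 : MemLp (fun ω => X ω 1) ⊤ μ := by
    have := (EuclideanSpace.proj (1 : Fin 2) : Vec 2 →L[ℝ] ℝ).comp_memLp' hX
    exact this
  -- r of the zero function is 0
  have r0 : r (fun _ : Ω => (0:ℝ)) = 0 := by
    have h := hr.homog (fun _ : Ω => (0:ℝ)) (memLp_const 0) 2 (by norm_num)
    have e : (fun ω : Ω => (2:ℝ) * (fun _ : Ω => (0:ℝ)) ω) = (fun _ : Ω => (0:ℝ)) := by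
      funext ω; simp
    rw [e] at h; linarith
  -- essential sup bound
  have hlt : eLpNormEssSup X μ < ⊤ := by
    have := hX.2; rwa [eLpNorm_exponent_top] at this
  set M : ℝ := (eLpNormEssSup X μ).toReal with hMdef
  have hM0 : 0 ≤ M := ENNReal.toReal_nonneg
  have hMae : ∀ᵐ ω ∂μ, ‖X ω‖ ≤ M := by
    filter_upwards [ae_le_eLpNormEssSup (f := X) (μ := μ)] with ω hω
    have h2 : ((‖X ω‖₊ : ℝ≥0∞)).toReal ≤ M := ENNReal.toReal_mono hlt.ne hω
    simpa using h2
  -- coordinatewise bound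
  have habs0 : ∀ v : Vec 2, |v 0| ≤ ‖v‖ := by
    intro v
    rw [EuclideanSpace.norm_eq, Fin.sum_univ_two, ← Real.sqrt_sq_eq_abs]
    apply Real.sqrt_le_sqrt
    rw [Real.norm_eq_abs, Real.norm_eq_abs, sq_abs, sq_abs]
    nlinarith [sq_nonneg (v 1)]
  have habs1 : ∀ v : Vec 2, |v 1| ≤ ‖v‖ := by
    intro v
    rw [EuclideanSpace.norm_eq, Fin.sum_univ_two, ← Real.sqrt_sq_eq_abs]
    apply Real.sqrt_le_sqrt
    rw [Real.norm_eq_abs, Real.norm_eq_abs, sq_abs, sq_abs]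
    nlinarith [sq_nonneg (v 0)]
  -- inner product formula
  have hinner : ∀ u v : Vec 2, ⟪u, v⟫ = u 0 * v 0 + u 1 * v 1 := by
    intro u v; simp [PiLp.inner_apply, Fin.sum_univ_two, RCLike.inner_apply]; ring
  -- the two extreme dual directions
  set u1 : Vec 2 := (WithLp.equiv 2 (Fin 2 → ℝ)).symm ![1, π12] with hu1def
  set u2 : Vec 2 := (WithLp.equiv 2 (Fin 2 → ℝ)).symm ![π21, 1] with hu2def
  have hu10 : u1 0 = 1 := rfl
  have hu11 : u1 1 = π12 := rfl
  have hu20 : u2 0 = π21 := rfl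
  have hu21 : u2 1 = 1 := rfl
  have hsmul : ∀ (c : ℝ) (v : Vec 2) (i : Fin 2), (c • v) i = c * v i := fun c v i => rfl
  have hadd : ∀ (v w : Vec 2) (i : Fin 2), (v + w) i = v i + w i := fun v w i => rfl
  have hu1K : ∀ y ∈ K, ⟪u1, y⟫ ≤ 0 := by
    intro y hy
    rw [hK] at hy
    obtain ⟨l, δ, hl, hδ, rfl⟩ := hy
    rw [hinner, hadd, hadd, hsmul, hsmul, hsmul, hsmul, hb₁.1, hb₁.2, hb₂.1, hb₂.2,
      hu10, hu11]
    nlinarith [mul_le_mul_of_nonneg_left hπ.le hl]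
  have hu2K : ∀ y ∈ K, ⟪u2, y⟫ ≤ 0 := by
    intro y hy
    rw [hK] at hy
    obtain ⟨l, δ, hl, hδ, rfl⟩ := hy
    rw [hinner, hadd, hadd, hsmul, hsmul, hsmul, hsmul, hb₁.1, hb₁.2, hb₂.1, hb₂.2,
      hu20, hu21]
    nlinarith [mul_le_mul_of_nonneg_left hπ.le hδ]
  -- memℒp of the two combinations
  have hg1mem : MemLp (fun ω => X ω 0 + π12 * X ω 1) ⊤ μ := hX0.add (hX1.const_mul π12)
  have hg2mem : MemLp (fun ω => π21 * X ω 0 + X ω 1) ⊤ μ := (hX0.const_mul π21).add hX1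
  set c₁ : ℝ := r (fun ω => X ω 0) with hc₁
  set c₂ : ℝ := r (fun ω => X ω 1) with hc₂
  set b : ℝ := 2*(M + |c₁| + |c₂| + π21*(|c₁|+M) + π12*(|c₂|+M)) + 1 with hbdef
  have haux1 : 0 ≤ π21*(|c₁|+M) := by positivity
  have haux2 : 0 ≤ π12*(|c₂|+M) := by positivity
  have hb0 : 0 < b := by
    have := abs_nonneg c₁; have := abs_nonneg c₂; nlinarith
  refine ⟨b, hb0, ?_⟩
  intro x hx hnorm
  simp only [Set.mem_iInter, Set.mem_setOf_eq] at hx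
  have hL1 : r (fun ω => X ω 0 + π12 * X ω 1) ≤ x 0 + π12 * x 1 := by
    have h := hx u1 hu1K
    have e2 : (fun ω => ⟪X ω, u1⟫) = (fun ω => X ω 0 + π12 * X ω 1) := by
      funext ω; rw [hinner, hu10, hu11]; ring
    rw [e2, hinner, hu10, hu11] at h
    linarith
  have hL2 : r (fun ω => π21 * X ω 0 + X ω 1) ≤ π21 * x 0 + x 1 := by
    have h := hx u2 hu2K
    have e2 : (fun ω => ⟪X ω, u2⟫) = (fun ω => π21 * X ω 0 + X ω 1) := by
      funext ω; rw [hinner, hu20, hu21]; ring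
    rw [e2, hinner, hu20, hu21] at h
    linarith
  apply subset_closure
  by_cases hA : x 0 ≤ -M
  · -- random selection along b₁, component 0 becomes 0
    refine ⟨fun ω => (-X ω 0 - x 0) • b₁, ?_, ?_, ?_⟩
    · have hl : MemLp (fun ω => -X ω 0 - x 0) ⊤ μ := by
        have := (hX0.neg).sub (memLp_const (μ := μ) (x 0))
        exact this
      have := (ContinuousLinearMap.toSpanSingleton ℝ b₁).comp_memLp' hl
      exact this
    · filter_upwards [hMae] with ω hω
      rw [hK]
      refine ⟨-X ω 0 - x 0, 0, ?_, le_refl 0, by simp⟩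
      have h1 : X ω 0 ≤ |X ω 0| := le_abs_self _
      have h2 : |X ω 0| ≤ ‖X ω‖ := habs0 (X ω)
      linarith
    · intro i
      fin_cases i
      · have e : (fun ω => X ω 0 + ((-X ω 0 - x 0) • b₁) 0 + x 0) = (fun _ : Ω => (0:ℝ)) := by
          funext ω; rw [hsmul, hb₁.1]; ring
        calc r (fun ω => X ω 0 + ((-X ω 0 - x 0) • b₁) 0 + x 0)
            = r (fun _ : Ω => (0:ℝ)) := by rw [e]
          _ = 0 := r0
          _ ≤ 0 := le_refl 0
      · have e : (fun ω => X ω 1 + ((-X ω 0 - x 0) • b₁) 1 + x 1)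
            = (fun ω => (π21 * X ω 0 + X ω 1) + (π21 * x 0 + x 1)) := by
          funext ω; rw [hsmul, hb₁.2]; ring
        have hc := hr.cash (fun ω => π21 * X ω 0 + X ω 1) hg2mem (π21 * x 0 + x 1)
        calc r (fun ω => X ω 1 + ((-X ω 0 - x 0) • b₁) 1 + x 1)
            = r (fun ω => (π21 * X ω 0 + X ω 1) + (π21 * x 0 + x 1)) := by rw [e]
          _ = r (fun ω => π21 * X ω 0 + X ω 1) - (π21 * x 0 + x 1) := hc
          _ ≤ 0 := by linarith
  · by_cases hB : x 1 ≤ -M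
    · -- random selection along b₂, component 1 becomes 0
      refine ⟨fun ω => (-X ω 1 - x 1) • b₂, ?_, ?_, ?_⟩
      · have hl : MemLp (fun ω => -X ω 1 - x 1) ⊤ μ := by
          have := (hX1.neg).sub (memLp_const (μ := μ) (x 1))
          exact this
        have := (ContinuousLinearMap.toSpanSingleton ℝ b₂).comp_memLp' hl
        exact this
      · filter_upwards [hMae] with ω hω
        rw [hK]
        refine ⟨0, -X ω 1 - x 1, le_refl 0, ?_, by simp⟩
        have h1 : X ω 1 ≤ |X ω 1| := le_abs_self _
        have h2 : |X ω 1| ≤ ‖X ω‖ := habs1 (X ω)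
        linarith
      · intro i
        fin_cases i
        · have e : (fun ω => X ω 0 + ((-X ω 1 - x 1) • b₂) 0 + x 0)
              = (fun ω => (X ω 0 + π12 * X ω 1) + (x 0 + π12 * x 1)) := by
            funext ω; rw [hsmul, hb₂.1]; ring
          have hc := hr.cash (fun ω => X ω 0 + π12 * X ω 1) hg1mem (x 0 + π12 * x 1)
          calc r (fun ω => X ω 0 + ((-X ω 1 - x 1) • b₂) 0 + x 0)
              = r (fun ω => (X ω 0 + π12 * X ω 1) + (x 0 + π12 * x 1)) := by rw [e]
            _ = r (fun ω => X ω 0 + π12 * X ω 1) - (x 0 + π12 * x 1) := hc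
            _ ≤ 0 := by linarith
        · have e : (fun ω => X ω 1 + ((-X ω 1 - x 1) • b₂) 1 + x 1) = (fun _ : Ω => (0:ℝ)) := by
            funext ω; rw [hsmul, hb₂.2]; ring
          calc r (fun ω => X ω 1 + ((-X ω 1 - x 1) • b₂) 1 + x 1)
              = r (fun _ : Ω => (0:ℝ)) := by rw [e]
            _ = 0 := r0
            _ ≤ 0 := le_refl 0
    · push_neg at hA hB
      -- one coordinate is at least b/2
      have hxnorm : ‖x‖ ≤ |x 0| + |x 1| := by
        rw [EuclideanSpace.norm_eq, Fin.sum_univ_two]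
        have h0 : ‖x 0‖ = |x 0| := Real.norm_eq_abs _
        have h1 : ‖x 1‖ = |x 1| := Real.norm_eq_abs _
        rw [h0, h1, ← Real.sqrt_sq (by positivity : (0:ℝ) ≤ |x 0| + |x 1|)]
        apply Real.sqrt_le_sqrt
        nlinarith [sq_abs (x 0), sq_abs (x 1), abs_nonneg (x 0), abs_nonneg (x 1),
          mul_nonneg (abs_nonneg (x 0)) (abs_nonneg (x 1))]
      have hMb : M + 1/2 ≤ b/2 := by
        have := abs_nonneg c₁; have := abs_nonneg c₂; nlinarith
      have hcase : b/2 ≤ x 0 ∨ b/2 ≤ x 1 := by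
        by_contra hcon
        push_neg at hcon
        rcases abs_cases (x 0) with ⟨e0, _⟩ | ⟨e0, _⟩ <;>
          rcases abs_cases (x 1) with ⟨e1, _⟩ | ⟨e1, _⟩ <;>
          linarith [hcon.1, hcon.2]
      rcases hcase with hcse | hcse
      · -- x 0 large : constant selection along b₂
        set δ₀ : ℝ := max 0 (c₂ - x 1) with hδ₀
        have hδ₀0 : 0 ≤ δ₀ := le_max_left _ _
        have hδ₀le : δ₀ ≤ |c₂| + M := by
          apply max_le (by positivity)
          have := le_abs_self c₂; linarith
        refine ⟨fun _ => δ₀ • b₂, memLp_const _, ?_, ?_⟩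
        · filter_upwards with ω
          rw [hK]
          exact ⟨0, δ₀, le_refl 0, hδ₀0, by simp⟩
        · intro i
          fin_cases i
          · have e : (fun ω => X ω 0 + (δ₀ • b₂) 0 + x 0)
                = (fun ω => X ω 0 + (δ₀ * (-π12) + x 0)) := by
              funext ω; rw [hsmul, hb₂.1]; ring
            have hc := hr.cash (fun ω => X ω 0) hX0 (δ₀ * (-π12) + x 0)
            calc r (fun ω => X ω 0 + (δ₀ • b₂) 0 + x 0)
                = r (fun ω => X ω 0 + (δ₀ * (-π12) + x 0)) := by rw [e]
              _ = c₁ - (δ₀ * (-π12) + x 0) := hc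
              _ ≤ 0 := by
                  have h1 : π12 * δ₀ ≤ π12 * (|c₂| + M) :=
                    mul_le_mul_of_nonneg_left hδ₀le h12.le
                  have h2 : c₁ ≤ |c₁| := le_abs_self _
                  nlinarith
          · have e : (fun ω => X ω 1 + (δ₀ • b₂) 1 + x 1)
                = (fun ω => X ω 1 + (δ₀ + x 1)) := by
              funext ω; rw [hsmul, hb₂.2]; ring
            have hc := hr.cash (fun ω => X ω 1) hX1 (δ₀ + x 1)
            calc r (fun ω => X ω 1 + (δ₀ • b₂) 1 + x 1)
                = r (fun ω => X ω 1 + (δ₀ + x 1)) := by rw [e]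
              _ = c₂ - (δ₀ + x 1) := hc
              _ ≤ 0 := by
                  have h1 : c₂ - x 1 ≤ δ₀ := le_max_right _ _
                  linarith
      · -- x 1 large : constant selection along b₁
        set l₀ : ℝ := max 0 (c₁ - x 0) with hl₀
        have hl₀0 : 0 ≤ l₀ := le_max_left _ _
        have hl₀le : l₀ ≤ |c₁| + M := by
          apply max_le (by positivity)
          have := le_abs_self c₁; linarith
        refine ⟨fun _ => l₀ • b₁, memLp_const _, ?_, ?_⟩
        · filter_upwards with ω
          rw [hK]
          exact ⟨l₀, 0, hl₀0, le_refl 0, by simp⟩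
        · intro i
          fin_cases i
          · have e : (fun ω => X ω 0 + (l₀ • b₁) 0 + x 0)
                = (fun ω => X ω 0 + (l₀ + x 0)) := by
              funext ω; rw [hsmul, hb₁.1]; ring
            have hc := hr.cash (fun ω => X ω 0) hX0 (l₀ + x 0)
            calc r (fun ω => X ω 0 + (l₀ • b₁) 0 + x 0)
                = r (fun ω => X ω 0 + (l₀ + x 0)) := by rw [e]
              _ = c₁ - (l₀ + x 0) := hc
              _ ≤ 0 := by
                  have h1 : c₁ - x 0 ≤ l₀ := le_max_right _ _
                  linarith
          · have e : (fun ω => X ω 1 + (l₀ • b₁) 1 + x 1)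
                = (fun ω => X ω 1 + (l₀ * (-π21) + x 1)) := by
              funext ω; rw [hsmul, hb₁.2]; ring
            have hc := hr.cash (fun ω => X ω 1) hX1 (l₀ * (-π21) + x 1)
            calc r (fun ω => X ω 1 + (l₀ • b₁) 1 + x 1)
                = r (fun ω => X ω 1 + (l₀ * (-π21) + x 1)) := by rw [e]
              _ = c₂ - (l₀ * (-π21) + x 1) := hc
              _ ≤ 0 := by
                  have h1 : π21 * l₀ ≤ π21 * (|c₁| + M) :=
                    mul_le_mul_of_nonneg_left hl₀le h21.le
                  have h2 : c₂ ≤ |c₂| := le_abs_self _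
                  nlinarith
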